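/- Let m ≥ 1 be an integer. Every ascending chain I_0 ⊆ I_1 ⊆ I_2 ⊆ ⋯ of GL(∞)-stable ideals of the polynomial ring R = ℂ[x_{i,j} : 1 ≤ i ≤ m, j ∈ ℕ] stabilizes; that is, there exists N such that I_k = I_N for all k ≥ N. -/

import Mathlib

/-- The substitution endomorphism of `R = ℂ[x_{i,j} : 1 ≤ i ≤ m, j ∈ ℕ]` attached to an
invertible `n × n` matrix `g`: it sends `x_{i,j}` to `∑_{j' < n} g_{j',j} x_{i,j'}` for `j < n`
and fixes `x_{i,j}` for `j ≥ n`. -/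
noncomputable def glSubst (m n : ℕ) (g : GL (Fin n) ℂ) :
    MvPolynomial (Fin m × ℕ) ℂ →ₐ[ℂ] MvPolynomial (Fin m × ℕ) ℂ :=
  MvPolynomial.aeval fun p =>
    if h : p.2 < n then
      ∑ j' : Fin n, ((g : Matrix (Fin n) (Fin n) ℂ) j' ⟨p.2, h⟩) •
        MvPolynomial.X (p.1, (j' : ℕ))
    else MvPolynomial.X p

/-- An ideal of `R = ℂ[x_{i,j} : 1 ≤ i ≤ m, j ∈ ℕ]` is `GL(∞)`-stable if it is mapped into
itself by all the substitution automorphisms. -/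
def GLStable (m : ℕ) (I : Ideal (MvPolynomial (Fin m × ℕ) ℂ)) : Prop :=
  ∀ (n : ℕ) (g : GL (Fin n) ℂ) (f : MvPolynomial (Fin m × ℕ) ℂ), f ∈ I → glSubst m n g f ∈ I


noncomputable section

namespace AscChainAux

open Finsupp MvPolynomial

abbrev Λ : Type := Lex (ℕᵒᵈ →₀ ℕ)

variable {m : ℕ}

/-- column-major encoding of variables into `ℕᵒᵈ`. -/
def enc (m : ℕ) (p : Fin m × ℕ) : ℕᵒᵈ := OrderDual.toDual (p.2 * m + p.1)

lemma enc_injective : Function.Injective (enc m) := by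
  rintro ⟨i, j⟩ ⟨i', j'⟩ h
  have h' : j * m + (i : ℕ) = j' * m + (i' : ℕ) := OrderDual.toDual.injective h
  have hm : 0 < m := i.pos
  have hi : ((i : ℕ) + j * m) % m = i := by
    rw [Nat.add_mul_mod_self_right, Nat.mod_eq_of_lt i.isLt]
  have hi' : ((i' : ℕ) + j' * m) % m = i' := by
    rw [Nat.add_mul_mod_self_right, Nat.mod_eq_of_lt i'.isLt]
  have hj : ((i : ℕ) + j * m) / m = j := by
    rw [Nat.add_mul_div_right _ _ hm, Nat.div_eq_of_lt i.isLt, Nat.zero_add]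
  have hj' : ((i' : ℕ) + j' * m) / m = j' := by
    rw [Nat.add_mul_div_right _ _ hm, Nat.div_eq_of_lt i'.isLt, Nat.zero_add]
  have e : (i : ℕ) + j * m = (i' : ℕ) + j' * m := by omega
  have : (i : ℕ) = i' := by rw [← hi, ← hi', e]
  have : j = j' := by rw [← hj, ← hj', e]
  aesop

/-- the "key" of a monomial: its exponent finsupp transported to `Λ`. -/
def key (μ : (Fin m × ℕ) →₀ ℕ) : Λ := toLex (Finsupp.mapDomain (enc m) μ)

lemma key_injective : Function.Injective (key (m := m)) := fun a b h =>
  Finsupp.mapDomain_injective enc_injective (toLex.injective h)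

lemma key_add (a b : (Fin m × ℕ) →₀ ℕ) : key (a + b) = key a + key b := by
  unfold key
  rw [Finsupp.mapDomain_add]
  rfl

lemma klt_wf : WellFounded fun a b : (Fin m × ℕ) →₀ ℕ => key a < key b :=
  InvImage.wf key (IsWellFounded.wf : WellFounded ((· < ·) : Λ → Λ → Prop))

lemma lex_lt_iff {a b : ℕᵒᵈ →₀ ℕ} :
    toLex a < toLex b ↔ ∃ j : ℕᵒᵈ, (∀ d : ℕᵒᵈ, d < j → a d = b d) ∧ a j < b j :=
  Finsupp.lex_def

/-- transport of Lex-inequality along a strictly monotone map of `ℕ`. -/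
lemma toLex_mapDomain_lt {ψ : ℕ → ℕ} (hψ : StrictMono ψ) {a b : ℕᵒᵈ →₀ ℕ}
    (h : toLex a < toLex b) :
    toLex (Finsupp.mapDomain (fun c : ℕᵒᵈ =>
        OrderDual.toDual (ψ (OrderDual.ofDual c))) a) <
      toLex (Finsupp.mapDomain (fun c : ℕᵒᵈ =>
        OrderDual.toDual (ψ (OrderDual.ofDual c))) b) := by
  set ψd : ℕᵒᵈ → ℕᵒᵈ := fun c => OrderDual.toDual (ψ (OrderDual.ofDual c)) with hψd
  have hinj : Function.Injective ψd := fun x y hxy => by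
    simpa [hψd] using hψ.injective (OrderDual.toDual.injective hxy)
  obtain ⟨j, hj, hlt⟩ := lex_lt_iff.1 h
  refine lex_lt_iff.2 ⟨ψd j, ?_, ?_⟩
  · intro d hd
    by_cases hr : d ∈ Set.range ψd
    · obtain ⟨e, rfl⟩ := hr
      have he : e < j := by
        have : ψ (OrderDual.ofDual j) < ψ (OrderDual.ofDual e) := hd
        exact hψ.lt_iff_lt.1 this
      rw [Finsupp.mapDomain_apply hinj, Finsupp.mapDomain_apply hinj, hj e he]
    · rw [Finsupp.mapDomain_notin_range _ _ hr, Finsupp.mapDomain_notin_range _ _ hr]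
  · rw [Finsupp.mapDomain_apply hinj, Finsupp.mapDomain_apply hinj]
    exact hlt

def colMap (m : ℕ) (φ : ℕ → ℕ) : ((Fin m × ℕ) →₀ ℕ) → ((Fin m × ℕ) →₀ ℕ) :=
  Finsupp.mapDomain (Prod.map id φ)

lemma enc_mod (i : Fin m) (j : ℕ) : (j * m + i) % m = i := by
  rw [Nat.add_comm, Nat.add_mul_mod_self_right, Nat.mod_eq_of_lt i.isLt]

lemma enc_div (i : Fin m) (j : ℕ) : (j * m + i) / m = j := by
  have h1 := i.isLt
  have hm : 0 < m := i.pos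
  rw [Nat.add_comm, Nat.add_mul_div_right _ _ hm, Nat.div_eq_of_lt h1, Nat.zero_add]

/-- the induced strictly monotone map on codes. -/
def codeMap (m : ℕ) (φ : ℕ → ℕ) (c : ℕ) : ℕ := φ (c / m) * m + c % m

lemma codeMap_strictMono (hm : 0 < m) {φ : ℕ → ℕ} (hφ : StrictMono φ) :
    StrictMono (codeMap m φ) := by
  intro c c' hcc'
  unfold codeMap
  rcases lt_or_eq_of_le (Nat.div_le_div_right (c := m) (le_of_lt hcc')) with hdiv | hdiv
  · have h1 : c % m < m := Nat.mod_lt _ hm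
    have h2 : φ (c / m) + 1 ≤ φ (c' / m) := Nat.succ_le_of_lt (hφ hdiv)
    calc φ (c / m) * m + c % m < φ (c / m) * m + m := by omega
    _ = (φ (c / m) + 1) * m := by ring
    _ ≤ φ (c' / m) * m := Nat.mul_le_mul_right m h2
    _ ≤ φ (c' / m) * m + c' % m := Nat.le_add_right _ _
  · have e1 := Nat.div_add_mod c m
    have e2 := Nat.div_add_mod c' m
    have e3 : m * (c / m) = m * (c' / m) := by rw [hdiv]
    have hmod : c % m < c' % m := by omega
    rw [hdiv]
    omega

lemma enc_comp (m : ℕ) (φ : ℕ → ℕ) (p : Fin m × ℕ) :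
    enc m (Prod.map id φ p) =
      OrderDual.toDual (codeMap m φ (OrderDual.ofDual (enc m p))) := by
  obtain ⟨i, j⟩ := p
  simp only [enc, Prod.map, id_eq, codeMap, OrderDual.ofDual_toDual]
  rw [enc_div i j, enc_mod i j]

lemma key_colMap_lt {φ : ℕ → ℕ} (hφ : StrictMono φ) {μ ν : (Fin m × ℕ) →₀ ℕ}
    (h : key μ < key ν) : key (colMap m φ μ) < key (colMap m φ ν) := by
  rcases Nat.eq_zero_or_pos m with hm | hm
  · subst hm
    have : μ = ν := Subsingleton.elim μ ν
    subst this
    exact absurd h (lt_irrefl _)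
  · have hcomp : ∀ ρ : (Fin m × ℕ) →₀ ℕ,
        Finsupp.mapDomain (enc m) (colMap m φ ρ) =
          Finsupp.mapDomain (fun c : ℕᵒᵈ =>
            OrderDual.toDual (codeMap m φ (OrderDual.ofDual c)))
            (Finsupp.mapDomain (enc m) ρ) := by
      intro ρ
      rw [colMap, ← Finsupp.mapDomain_comp, ← Finsupp.mapDomain_comp]
      congr 1
      funext p
      exact enc_comp m φ p
    unfold key
    rw [hcomp, hcomp]
    exact toLex_mapDomain_lt (codeMap_strictMono hm hφ) h
/-- the `j`-th column of a monomial, as an exponent vector on `Fin m`. -/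
def col (μ : (Fin m × ℕ) →₀ ℕ) (j : ℕ) : Fin m →₀ ℕ :=
  Finsupp.equivFunOnFinite.symm (fun i => μ (i, j))

lemma col_apply (μ : (Fin m × ℕ) →₀ ℕ) (j : ℕ) (i : Fin m) : col μ j i = μ (i, j) := rfl

def colBound (μ : (Fin m × ℕ) →₀ ℕ) : ℕ := (μ.support.sup Prod.snd) + 1

lemma apply_eq_zero_of_colBound_le {μ : (Fin m × ℕ) →₀ ℕ} {i : Fin m} {j : ℕ}
    (h : colBound μ ≤ j) : μ (i, j) = 0 := by
  by_contra hne
  have hmem : (i, j) ∈ μ.support := Finsupp.mem_support_iff.2 hne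
  have := Finset.le_sup (f := Prod.snd) hmem
  simp only [colBound] at h
  omega

lemma prodmap_injective {φ : ℕ → ℕ} (hφ : Function.Injective φ) :
    Function.Injective (Prod.map (id : Fin m → Fin m) φ) :=
  Function.Injective.prodMap Function.injective_id hφ

lemma higman (u : ℕ → ((Fin m × ℕ) →₀ ℕ)) :
    ∃ j k, j < k ∧ ∃ φ : ℕ ↪o ℕ, colMap m φ (u j) ≤ u k := by
  classical
  have hpwo : (Set.univ : Set (Fin m →₀ ℕ)).PartiallyWellOrderedOn (· ≤ ·) :=
    Set.isPWO_of_wellQuasiOrderedLE _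
  have hhig := hpwo.partiallyWellOrderedOn_sublistForall₂ (r := (· ≤ ·))
  set L : ℕ → List (Fin m →₀ ℕ) := fun k => (List.range (colBound (u k))).map (col (u k))
    with hL
  obtain ⟨j, k, hjk, hrel⟩ := hhig.exists_lt (f := L) (fun n x _ => Set.mem_univ x)
  obtain ⟨l, hfa, hsub⟩ := List.sublistForall₂_iff.1 hrel
  obtain ⟨φ, hφ⟩ := List.sublist_iff_exists_orderEmbedding_getElem?_eq.1 hsub
  refine ⟨j, k, hjk, φ, ?_⟩
  have hlen : (L j).length = l.length := hfa.length_eq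
  have hlenj : (L j).length = colBound (u j) := by simp [hL]
  -- pointwise column comparison
  have hcol : ∀ j₀ : ℕ, j₀ < colBound (u j) → col (u j) j₀ ≤ col (u k) (φ j₀) := by
    intro j₀ hj₀
    have hj₀' : j₀ < (L j).length := by omega
    have hj₀l : j₀ < l.length := by omega
    have hget : (L j).get ⟨j₀, hj₀'⟩ = col (u j) j₀ := by
      simp [hL]
    have hrel₀ : (L j).get ⟨j₀, hj₀'⟩ ≤ l.get ⟨j₀, hj₀l⟩ := by
      rcases List.forall₂_iff_get.1 hfa with ⟨h1, h2⟩
      exact h2 j₀ hj₀' hj₀l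
    have hgq : l[j₀]? = (L k)[φ j₀]? := hφ j₀
    have hsome : l[j₀]? = some (l.get ⟨j₀, hj₀l⟩) := List.getElem?_eq_getElem hj₀l
    have hlk : (L k)[φ j₀]? = some (l.get ⟨j₀, hj₀l⟩) := by rw [← hgq, hsome]
    have hφlt : φ j₀ < (L k).length := by
      by_contra hge
      rw [List.getElem?_eq_none (le_of_not_gt hge)] at hlk
      exact Option.some_ne_none _ hlk.symm
    have hval : (L k).get ⟨φ j₀, hφlt⟩ = l.get ⟨j₀, hj₀l⟩ := by
      have := List.getElem?_eq_getElem hφlt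
      rw [this] at hlk
      exact Option.some.inj hlk
    have hgetk : (L k).get ⟨φ j₀, hφlt⟩ = col (u k) (φ j₀) := by
      simp [hL]
    calc col (u j) j₀ = (L j).get ⟨j₀, hj₀'⟩ := hget.symm
      _ ≤ l.get ⟨j₀, hj₀l⟩ := hrel₀
      _ = (L k).get ⟨φ j₀, hφlt⟩ := hval.symm
      _ = col (u k) (φ j₀) := hgetk
  -- conclude the finsupp inequality
  have hinj : Function.Injective (Prod.map (id : Fin m → Fin m) ⇑φ) :=
    prodmap_injective φ.injective
  rw [Finsupp.le_def]
  intro p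
  obtain ⟨i, c⟩ := p
  by_cases hr : (i, c) ∈ Set.range (Prod.map (id : Fin m → Fin m) ⇑φ)
  · obtain ⟨⟨i', j₀⟩, hp⟩ := hr
    rw [Prod.ext_iff] at hp
    simp only [Prod.map_fst, Prod.map_snd, id_eq] at hp
    obtain ⟨hi, hc⟩ := hp
    rw [← hc, ← hi]
    have h1 : colMap m (⇑φ) (u j) (Prod.map id ⇑φ (i', j₀)) = (u j) (i', j₀) :=
      Finsupp.mapDomain_apply hinj _ _
    simp only [Prod.map, id_eq] at h1
    rw [h1]
    by_cases hb : j₀ < colBound (u j)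
    · have h2 := Finsupp.le_def.1 (hcol j₀ hb) i'
      rwa [col_apply, col_apply] at h2
    · rw [apply_eq_zero_of_colBound_le (le_of_not_gt hb)]
      exact Nat.zero_le _
  · rw [colMap, Finsupp.mapDomain_notin_range _ _ hr]
    exact Nat.zero_le _
abbrev R (m : ℕ) := MvPolynomial (Fin m × ℕ) ℂ

lemma exists_lm (f : R m) (hf : f ≠ 0) :
    ∃ μ ∈ f.support, ∀ ν ∈ f.support, key ν ≤ key μ :=
  f.support.exists_max_image key (MvPolynomial.support_nonempty.2 hf)

def LM (f : R m) : (Fin m × ℕ) →₀ ℕ :=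
  if h : f = 0 then 0 else (exists_lm f h).choose

lemma LM_mem {f : R m} (hf : f ≠ 0) : LM f ∈ f.support := by
  rw [LM, dif_neg hf]
  exact (exists_lm f hf).choose_spec.1

lemma LM_max {f : R m} (hf : f ≠ 0) : ∀ ν ∈ f.support, key ν ≤ key (LM f) := by
  rw [LM, dif_neg hf]
  exact (exists_lm f hf).choose_spec.2

lemma LM_eq_of {f : R m} {μ} (hf : f ≠ 0) (hμ : μ ∈ f.support)
    (hmax : ∀ ν ∈ f.support, key ν ≤ key μ) : LM f = μ :=
  key_injective (le_antisymm (hmax _ (LM_mem hf)) (LM_max hf _ hμ))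

def lc (f : R m) : ℂ := MvPolynomial.coeff (LM f) f

lemma lc_ne_zero {f : R m} (hf : f ≠ 0) : lc f ≠ 0 :=
  MvPolynomial.mem_support_iff.1 (LM_mem hf)

lemma key_lt_LM_of_ne {f : R m} (hf : f ≠ 0) {ν} (hν : ν ∈ f.support) (hne : ν ≠ LM f) :
    key ν < key (LM f) :=
  lt_of_le_of_ne (LM_max hf _ hν) (fun h => hne (key_injective h))

/-- The key division step : subtracting the appropriate multiple of `g` kills the leading
monomial of `f` and only creates strictly smaller monomials. -/
lemma division_step {f g : R m} (hf : f ≠ 0) (hg : g ≠ 0) {w' : (Fin m × ℕ) →₀ ℕ}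
    (hdiv : LM f = w' + LM g) :
    ∀ μ ∈ (f - g * monomial w' (lc f / lc g)).support, key μ < key (LM f) := by
  classical
  set q : R m := g * monomial w' (lc f / lc g) with hq
  have hcq : MvPolynomial.coeff (LM f) q = lc f := by
    rw [hq, hdiv, MvPolynomial.coeff_mul_monomial']
    rw [if_pos (le_add_right (le_refl w'))]
    rw [add_tsub_cancel_left]
    show lc g * (lc f / lc g) = lc f
    field_simp [lc_ne_zero hg]
  have hqsupp : ∀ μ ∈ q.support, μ = LM f ∨ key μ < key (LM f) := by
    intro μ hμ
    have hcoeff : MvPolynomial.coeff μ q ≠ 0 := MvPolynomial.mem_support_iff.1 hμ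
    rw [hq, MvPolynomial.coeff_mul_monomial'] at hcoeff
    by_cases hle : w' ≤ μ
    · rw [if_pos hle] at hcoeff
      have hgc : MvPolynomial.coeff (μ - w') g ≠ 0 := fun h => hcoeff (by rw [h]; ring)
      have hmem : μ - w' ∈ g.support := MvPolynomial.mem_support_iff.2 hgc
      have hrepr : μ = w' + (μ - w') := (add_tsub_cancel_of_le hle).symm
      by_cases heq : μ - w' = LM g
      · left
        rw [hdiv, hrepr, heq]
      · right
        have hlt : key (μ - w') < key (LM g) := key_lt_LM_of_ne hg hmem heq
        calc key μ = key (w' + (μ - w')) := by rw [← hrepr]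
          _ = key w' + key (μ - w') := key_add _ _
          _ < key w' + key (LM g) := by exact add_lt_add_right hlt _
          _ = key (w' + LM g) := (key_add _ _).symm
          _ = key (LM f) := by rw [← hdiv]
    · rw [if_neg hle] at hcoeff
      exact absurd rfl hcoeff
  intro μ hμ
  have hμne : μ ≠ LM f := by
    intro h
    have hc0 : MvPolynomial.coeff (LM f) (f - q) = 0 := by
      rw [MvPolynomial.coeff_sub, hcq]
      show lc f - lc f = 0
      ring
    rw [h] at hμ
    exact MvPolynomial.mem_support_iff.1 hμ hc0
  have hsub := MvPolynomial.support_sub _ f q hμ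
  rcases Finset.mem_union.1 hsub with h | h
  · exact key_lt_LM_of_ne hf h hμne
  · rcases hqsupp μ h with h' | h'
    · exact absurd h' hμne
    · exact h'

/-- behaviour of `LM` and `lc` under an injective, order-compatible renaming. -/
lemma LM_rename {f : R m} (hf : f ≠ 0) {τ : (Fin m × ℕ) → (Fin m × ℕ)}
    (hτ : Function.Injective τ)
    (hmono : ∀ μ ∈ f.support, ∀ ν ∈ f.support,
      key μ < key ν → key (Finsupp.mapDomain τ μ) < key (Finsupp.mapDomain τ ν)) :
    rename τ f ≠ 0 ∧ LM (rename τ f) = Finsupp.mapDomain τ (LM f) ∧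
      lc (rename τ f) = lc f := by
  classical
  have hco : MvPolynomial.coeff (Finsupp.mapDomain τ (LM f)) (rename τ f)
      = MvPolynomial.coeff (LM f) f := coeff_rename_mapDomain τ hτ f (LM f)
  have hne : rename τ f ≠ 0 := by
    intro h
    apply lc_ne_zero hf
    rw [lc, ← hco, h, MvPolynomial.coeff_zero]
  have hmem : Finsupp.mapDomain τ (LM f) ∈ (rename τ f).support := by
    rw [MvPolynomial.mem_support_iff, hco]
    exact lc_ne_zero hf
  have hmax : ∀ ν ∈ (rename τ f).support, key ν ≤ key (Finsupp.mapDomain τ (LM f)) := by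
    intro ν hν
    rw [support_rename_of_injective hτ, Finset.mem_image] at hν
    obtain ⟨μ, hμ, rfl⟩ := hν
    by_cases heq : μ = LM f
    · subst heq; exact le_refl _
    · exact le_of_lt (hmono μ hμ (LM f) (LM_mem hf) (key_lt_LM_of_ne hf hμ heq))
  refine ⟨hne, LM_eq_of hne hmem hmax, ?_⟩
  rw [lc, LM_eq_of hne hmem hmax, hco, lc]
/-- a pwo set has a finite basis. -/
lemma pwo_finite_basis {α : Type*} (r : α → α → Prop) (s : Set α)
    (h : s.PartiallyWellOrderedOn r) :
    ∃ t : Finset α, ↑t ⊆ s ∧ ∀ x ∈ s, ∃ y ∈ t, r y x := by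
  classical
  by_contra hcon
  push_neg at hcon
  have pick : ∀ t : {t : Finset α // ↑t ⊆ s}, {x : α // x ∈ s ∧ ∀ y ∈ t.1, ¬ r y x} := by
    intro t
    have h1 := hcon t.1 t.2
    exact ⟨h1.choose, h1.choose_spec.1, h1.choose_spec.2⟩
  let next : {t : Finset α // ↑t ⊆ s} → {t : Finset α // ↑t ⊆ s} := fun t =>
    ⟨insert (pick t).1 t.1, by
      rw [Finset.coe_insert]
      exact Set.insert_subset (pick t).2.1 t.2⟩
  let G : ℕ → {t : Finset α // ↑t ⊆ s} := fun k => next^[k] ⟨∅, by simp⟩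
  let F : ℕ → α := fun k => (pick (G k)).1
  have hGsucc : ∀ k, G (k + 1) = next (G k) := fun k => Function.iterate_succ_apply' next k _
  have hmono : ∀ j k, j ≤ k → (G j).1 ⊆ (G k).1 := by
    intro j k hjk
    induction k with
    | zero => simp_all
    | succ k ih =>
      rcases Nat.lt_or_ge j (k + 1) with hlt | hge
      · have h1 := ih (Nat.lt_succ_iff.1 hlt)
        intro x hx
        rw [hGsucc k]
        exact Finset.mem_insert_of_mem (h1 hx)
      · have : j = k + 1 := le_antisymm hjk hge
        subst this
        exact fun x hx => hx
  have hFmem : ∀ j k, j < k → F j ∈ (G k).1 := by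
    intro j k hjk
    have h1 : F j ∈ (G (j + 1)).1 := by
      rw [hGsucc j]
      exact Finset.mem_insert_self _ _
    exact hmono (j + 1) k hjk h1
  obtain ⟨j, k, hjk, hr⟩ := h.exists_lt (f := F) (fun n => (pick (G n)).2.1)
  exact (pick (G k)).2.2 (F j) (hFmem j k hjk) hr

/-- renaming only depends on the values on the variables. -/
lemma rename_congr_of_vars {σ : Type*} [DecidableEq σ] {f : MvPolynomial σ ℂ} {τ τ' : σ → σ}
    (h : ∀ p ∈ f.vars, τ p = τ' p) : rename τ f = rename τ' f := by
  conv_lhs => rw [f.as_sum]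
  conv_rhs => rw [f.as_sum]
  rw [map_sum, map_sum]
  refine Finset.sum_congr rfl fun μ hμ => ?_
  rw [rename_monomial, rename_monomial]
  have : Finsupp.mapDomain τ μ = Finsupp.mapDomain τ' μ := by
    apply Finsupp.mapDomain_congr
    intro p hp
    exact h p ((mem_vars p).2 ⟨μ, hμ, hp⟩)
  rw [this]

/-- the permutation matrix of `π⁻¹`, as an element of `GL`. -/
def permGL (n : ℕ) (π : Equiv.Perm (Fin n)) : GL (Fin n) ℂ where
  val := (π⁻¹).permMatrix ℂ
  inv := π.permMatrix ℂ
  val_inv := by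
    rw [Equiv.Perm.permMatrix, Equiv.Perm.permMatrix, ← PEquiv.toMatrix_trans,
      ← Equiv.toPEquiv_trans]
    have hid : Equiv.trans (π⁻¹ : Equiv.Perm (Fin n)) π = Equiv.refl (Fin n) := by
      ext x; simp
    rw [hid, Equiv.toPEquiv_refl, PEquiv.toMatrix_refl]
  inv_val := by
    rw [Equiv.Perm.permMatrix, Equiv.Perm.permMatrix, ← PEquiv.toMatrix_trans,
      ← Equiv.toPEquiv_trans]
    have hid : Equiv.trans π (π⁻¹ : Equiv.Perm (Fin n)) = Equiv.refl (Fin n) := by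
      ext x; simp
    rw [hid, Equiv.toPEquiv_refl, PEquiv.toMatrix_refl]

/-- extension of a permutation of `Fin n` to a permutation of `ℕ`. -/
def extPerm (n : ℕ) (π : Equiv.Perm (Fin n)) : Equiv.Perm ℕ :=
  π.extendDomain Fin.equivSubtype

lemma extPerm_lt {n : ℕ} (π : Equiv.Perm (Fin n)) {j : ℕ} (h : j < n) :
    extPerm n π j = π ⟨j, h⟩ := by
  rw [extPerm, Equiv.Perm.extendDomain_apply_subtype π Fin.equivSubtype h]
  rfl

lemma extPerm_ge {n : ℕ} (π : Equiv.Perm (Fin n)) {j : ℕ} (h : ¬ j < n) :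
    extPerm n π j = j :=
  Equiv.Perm.extendDomain_apply_not_subtype π Fin.equivSubtype h

lemma glSubst_permGL (n : ℕ) (π : Equiv.Perm (Fin n)) :
    glSubst m n (permGL n π) = rename (Prod.map id (extPerm n π)) := by
  apply MvPolynomial.algHom_ext
  intro p
  obtain ⟨i, j⟩ := p
  rw [glSubst, MvPolynomial.aeval_X, MvPolynomial.rename_X]
  by_cases h : j < n
  · rw [dif_pos h]
    have hentry : ∀ j' : Fin n,
        ((permGL n π : Matrix (Fin n) (Fin n) ℂ) j' ⟨j, h⟩) = if j' = π ⟨j, h⟩ then 1 else 0 := by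
      intro j'
      show ((π⁻¹).permMatrix ℂ) j' ⟨j, h⟩ = _
      rw [Equiv.Perm.permMatrix, PEquiv.toMatrix_apply]
      by_cases hc : j' = π ⟨j, h⟩
      · have hA : (⟨j, h⟩ : Fin n) ∈ (π⁻¹).toPEquiv j' := by
          simp [Equiv.toPEquiv_apply, hc]
        rw [if_pos hA, if_pos hc]
      · have hA : ¬ (⟨j, h⟩ : Fin n) ∈ (π⁻¹).toPEquiv j' := by
          simp only [Equiv.toPEquiv_apply, Option.mem_def, Option.some.injEq]
          intro hh
          exact hc (by rw [← hh]; simp)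
        rw [if_neg hA, if_neg hc]
    calc (∑ j' : Fin n, ((permGL n π : Matrix (Fin n) (Fin n) ℂ) j' ⟨j, h⟩) •
            MvPolynomial.X (i, (j' : ℕ)))
        = ∑ j' : Fin n, (if j' = π ⟨j, h⟩ then MvPolynomial.X (i, (j' : ℕ)) else 0) := by
          refine Finset.sum_congr rfl fun j' _ => ?_
          rw [hentry j']
          split_ifs with hc
          · rw [one_smul]
          · rw [zero_smul]
      _ = MvPolynomial.X (i, ((π ⟨j, h⟩ : Fin n) : ℕ)) := by
          rw [Finset.sum_ite_eq' Finset.univ (π ⟨j, h⟩)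
            (fun j' => MvPolynomial.X (i, (j' : ℕ)))]
          rw [if_pos (Finset.mem_univ _)]
      _ = MvPolynomial.X (Prod.map id (⇑(extPerm n π)) (i, j)) := by
          rw [Prod.map]
          simp only [id_eq]
          rw [extPerm_lt π h]
  · rw [dif_neg h]
    rw [Prod.map]
    simp only [id_eq]
    rw [extPerm_ge π h]

lemma stable_rename_perm {I : Ideal (MvPolynomial (Fin m × ℕ) ℂ)} (hI : GLStable m I)
    (n : ℕ) (π : Equiv.Perm (Fin n)) {f : MvPolynomial (Fin m × ℕ) ℂ} (hf : f ∈ I) :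
    rename (Prod.map id (extPerm n π)) f ∈ I := by
  rw [← glSubst_permGL]
  exact hI n (permGL n π) f hf

/-- extend (the restriction to `[0,n)` of) an increasing injection to a finite permutation. -/
lemma exists_perm_extending (φ : ℕ ↪o ℕ) (n : ℕ) :
    ∃ (N : ℕ) (π : Equiv.Perm (Fin N)), ∀ j, j < n → extPerm N π j = φ j := by
  classical
  set N := φ n + 1 with hN
  have hn : n < N := Nat.lt_succ_of_le (φ.strictMono.le_apply)
  have hφlt : ∀ j, j < n → φ j < N := fun j hj =>
    Nat.lt_succ_of_le (le_of_lt (φ.strictMono hj))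
  set p : Fin N → Prop := fun x => (x : ℕ) < n with hp
  set q : Fin N → Prop := fun x => ∃ j, j < n ∧ (x : ℕ) = φ j with hq'
  let fwd : {x // p x} → {x // q x} := fun x => ⟨⟨φ x.1, hφlt _ x.2⟩, ⟨x.1, x.2, rfl⟩⟩
  have hbij : Function.Bijective fwd := by
    constructor
    · intro x y hxy
      apply Subtype.ext
      apply Fin.ext
      have : (φ (x.1 : ℕ) : ℕ) = φ (y.1 : ℕ) := by
        simpa [fwd] using congrArg (fun z => ((z : {x // q x}) : Fin N).1) hxy
      exact φ.injective this
    · rintro ⟨x, j, hj, hx⟩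
      refine ⟨⟨⟨j, lt_trans hj hn⟩, hj⟩, ?_⟩
      apply Subtype.ext
      apply Fin.ext
      exact hx.symm
  refine ⟨N, (Equiv.ofBijective fwd hbij).extendSubtype, fun j hj => ?_⟩
  have hjN : j < N := lt_trans hj hn
  rw [extPerm_lt _ hjN]
  have hext := (Equiv.ofBijective fwd hbij).extendSubtype_apply_of_mem ⟨j, hjN⟩ hj
  rw [hext]
  rfl


end AscChainAux

end

set_option maxHeartbeats 1000000 in
open AscChainAux Finsupp MvPolynomial in
/-- Every ascending chain of `GL(∞)`-stable ideals of `ℂ[x_{i,j} : 1 ≤ i ≤ m, j ∈ ℕ]`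
stabilizes. -/
theorem ascending_chain_of_GLStable_ideals_stabilizes (m : ℕ) (hm : 1 ≤ m)
    (I : ℕ → Ideal (MvPolynomial (Fin m × ℕ) ℂ))
    (hchain : ∀ k, I k ≤ I (k + 1)) (hstab : ∀ k, GLStable m (I k)) :
    ∃ N, ∀ k, N ≤ k → I k = I N := by
  classical
  have Imono : ∀ a b, a ≤ b → I a ≤ I b := fun a b hab =>
    monotone_nat_of_le_succ hchain hab
  set r : ((Fin m × ℕ) →₀ ℕ) → ((Fin m × ℕ) →₀ ℕ) → Prop :=
    fun u v => ∃ φ : ℕ ↪o ℕ, colMap m (⇑φ) u ≤ v with hr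
  have hpwo : (Set.univ : Set ((Fin m × ℕ) →₀ ℕ)).PartiallyWellOrderedOn r := by
    rw [Set.partiallyWellOrderedOn_iff_exists_lt]
    intro u _
    obtain ⟨j, k, hjk, φ, hφ⟩ := higman u
    exact ⟨j, k, hjk, φ, hφ⟩
  set U : Set ((Fin m × ℕ) →₀ ℕ) :=
    {μ | ∃ k, ∃ f : MvPolynomial (Fin m × ℕ) ℂ, f ∈ I k ∧ f ≠ 0 ∧ LM f = μ} with hU
  obtain ⟨t, hts, hbasis⟩ := pwo_finite_basis r U (hpwo.mono (Set.subset_univ U))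
  have hwit : ∀ v : {v // v ∈ t}, ∃ kf : ℕ × MvPolynomial (Fin m × ℕ) ℂ,
      kf.2 ∈ I kf.1 ∧ kf.2 ≠ 0 ∧ LM kf.2 = v.1 := by
    intro v
    obtain ⟨k, f, h1, h2, h3⟩ := hts v.2
    exact ⟨(k, f), h1, h2, h3⟩
  choose wit hwit1 hwit2 hwit3 using hwit
  set N := Finset.univ.sup (fun v : {v // v ∈ t} => (wit v).1) with hN
  have hg : ∀ v, (wit v).2 ∈ I N := fun v =>
    Imono _ _ (Finset.le_sup (Finset.mem_univ v)) (hwit1 v)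
  set gen : Ideal (MvPolynomial (Fin m × ℕ) ℂ) :=
    Ideal.span {p | ∃ (v : {v // v ∈ t}) (n : ℕ) (π : Equiv.Perm (Fin n)),
      p = rename (Prod.map id (⇑(extPerm n π))) (wit v).2} with hgen
  have hgenle : gen ≤ I N := by
    rw [hgen, Ideal.span_le]
    rintro p ⟨v, n, π, rfl⟩
    exact stable_rename_perm (hstab N) n π (hg v)
  have main : ∀ u : (Fin m × ℕ) →₀ ℕ, ∀ f : MvPolynomial (Fin m × ℕ) ℂ,
      (∃ k, f ∈ I k) → f ≠ 0 → LM f = u → f ∈ gen := by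
    have hstep : ∀ u : (Fin m × ℕ) →₀ ℕ,
        (∀ u', key u' < key u →
          ∀ f : MvPolynomial (Fin m × ℕ) ℂ, (∃ k, f ∈ I k) → f ≠ 0 → LM f = u' → f ∈ gen) →
        ∀ f : MvPolynomial (Fin m × ℕ) ℂ, (∃ k, f ∈ I k) → f ≠ 0 → LM f = u → f ∈ gen := by
      intro u IH f hfI hf0 hLM
      have hUmem : LM f ∈ U := by
        obtain ⟨k, hk⟩ := hfI
        exact ⟨k, f, hk, hf0, rfl⟩
      obtain ⟨v0, hv0t, hrv⟩ := hbasis _ hUmem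
      obtain ⟨φ, hφle⟩ := hrv
      set v : {v // v ∈ t} := ⟨v0, hv0t⟩ with hv
      set g := (wit v).2 with hgdef
      have hg0 : g ≠ 0 := hwit2 v
      have hLMg : LM g = v0 := hwit3 v
      set n := (g.vars.sup Prod.snd) + 1 with hn
      obtain ⟨N', π, hπ⟩ := exists_perm_extending φ n
      set τ : (Fin m × ℕ) → (Fin m × ℕ) := Prod.map id (⇑(extPerm N' π)) with hτ
      set τ' : (Fin m × ℕ) → (Fin m × ℕ) := Prod.map id (⇑φ) with hτ'
      have hτinj : Function.Injective τ := prodmap_injective (extPerm N' π).injective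
      have hagree : ∀ μ ∈ g.support, Finsupp.mapDomain τ μ = Finsupp.mapDomain τ' μ := by
        intro μ hμ
        apply Finsupp.mapDomain_congr
        intro p hp
        have hvars : p ∈ g.vars := (mem_vars p).2 ⟨μ, hμ, hp⟩
        have hlt : p.2 < n := by
          have := Finset.le_sup (f := Prod.snd) hvars
          omega
        show (p.1, extPerm N' π p.2) = (p.1, φ p.2)
        rw [hπ p.2 hlt]
      have hmono : ∀ μ ∈ g.support, ∀ ν ∈ g.support, key μ < key ν →
          key (Finsupp.mapDomain τ μ) < key (Finsupp.mapDomain τ ν) := by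
        intro μ hμ ν hν hlt
        rw [hagree μ hμ, hagree ν hν]
        exact key_colMap_lt φ.strictMono hlt
      obtain ⟨hg'0, hLMg', hlcg'⟩ := LM_rename hg0 hτinj hmono
      set g' := rename τ g with hg'def
      have hg'I : g' ∈ I N := stable_rename_perm (hstab N) N' π (hg v)
      have hLMg'2 : LM g' = colMap m (⇑φ) v0 := by
        rw [hLMg', hagree (LM g) (LM_mem hg0), hLMg]
        rfl
      have hle : LM g' ≤ LM f := by
        rw [hLMg'2]
        exact hφle
      have hdiv : LM f = (LM f - LM g') + LM g' := (tsub_add_cancel_of_le hle).symm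
      set w' : (Fin m × ℕ) →₀ ℕ := LM f - LM g' with hw'
      set q := g' * monomial w' (lc f / lc g') with hq
      have hqgen : q ∈ gen := by
        rw [hq]
        apply Ideal.mul_mem_right
        apply Ideal.subset_span
        exact ⟨v, N', π, rfl⟩
      have hhI : ∃ k', f - q ∈ I k' := by
        obtain ⟨k, hk⟩ := hfI
        refine ⟨max k N, ?_⟩
        apply Ideal.sub_mem
        · exact Imono k _ (le_max_left _ _) hk
        · rw [hq]
          exact Ideal.mul_mem_right _ _ (Imono N _ (le_max_right _ _) hg'I)
      by_cases hh0 : f - q = 0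
      · rw [← sub_eq_zero.1 hh0] at hqgen
        exact hqgen
      · have hsteps := division_step hf0 hg'0 hdiv
        have hklt : key (LM (f - q)) < key (LM f) := hsteps _ (LM_mem hh0)
        rw [hLM] at hklt
        have hin : f - q ∈ gen := IH (LM (f - q)) hklt (f - q) hhI hh0 rfl
        have hfq : f = (f - q) + q := by ring
        rw [hfq]
        exact Ideal.add_mem _ hin hqgen
    exact fun u => (klt_wf (m := m)).induction u hstep
  refine ⟨N, fun k hk => ?_⟩
  apply le_antisymm
  · intro f hf
    by_cases hf0 : f = 0
    · rw [hf0]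
      exact Submodule.zero_mem _
    · exact hgenle (main (LM f) f ⟨k, hf⟩ hf0 rfl)
  · exact Imono N k hk
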